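/- arXiv:1005.0083 — 2 statements merged into one kernel-verified Lean document; each statement's English description precedes it below -/
import Mathlib

section
/- Let Γ be a set of pure z-filters on LMC(S). Then the following are equivalent: (a) for every topological choice function f for Γ there is a finite subfamily 𝓕 of Γ such that S^LMC = ⋃_{𝓛∈𝓕} int(cl ε(f(𝓛))); (a') for every p̃ ∈ S^LMC there exists 𝓛 ∈ Γ with 𝓛 ⊆ p̃. -/
open Set Topology WeakDual BoundedContinuousFunction

noncomputable section

variable (S : Type*) [TopologicalSpace S] [T2Space S] [Semigroup S]

/-- Left translation `λ_s`, as a continuous map, given continuity of left translations. -/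
def lamC (hl : ∀ s : S, Continuous (fun t => s * t)) (s : S) : C(S, S) :=
  ⟨fun t => s * t, hl s⟩

/-- An m-admissible subalgebra of `CB(S) = S →ᵇ ℂ`. -/
structure MAdmissible (hl : ∀ s : S, Continuous (fun t => s * t)) : Type _ where
  carrier : StarSubalgebra ℂ (S →ᵇ ℂ)
  isClosed' : IsClosed (carrier : Set (S →ᵇ ℂ))
  leftInvariant : ∀ (s : S), ∀ f ∈ carrier, f.compContinuous (lamC S hl s) ∈ carrier
  mAdmissible : ∀ (μ : characterSpace ℂ carrier) (f : S →ᵇ ℂ) (hf : f ∈ carrier),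
    ∃ g ∈ carrier, ∀ s : S,
      g s = μ ⟨f.compContinuous (lamC S hl s), leftInvariant s f hf⟩

variable {hl : ∀ s : S, Continuous (fun t => s * t)}

/-- The spectrum `S^F` of an m-admissible subalgebra. -/
abbrev specF (F : MAdmissible S hl) : Type _ := characterSpace ℂ F.carrier

/-- Evaluation at a point, as an algebra homomorphism on `F`. -/
def evalHom (F : MAdmissible S hl) (s : S) : F.carrier →ₐ[ℂ] ℂ where
  toFun f := (f : S →ᵇ ℂ) s
  map_one' := rfl
  map_mul' _ _ := rfl
  map_zero' := rfl
  map_add' _ _ := rfl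
  commutes' _ := rfl

/-- The evaluation map `ε : S → S^F`. -/
def epsF (F : MAdmissible S hl) (s : S) : specF S F :=
  haveI : CompleteSpace F.carrier := F.isClosed'.completeSpace_coe
  CharacterSpace.equivAlgHom.symm (evalHom S F s)

variable (F : MAdmissible S hl)

/-- `Z(F)`: the collection of zero sets of members of `F`. -/
def ZSet : Set (Set S) := {A | ∃ f ∈ F.carrier, A = {s : S | f s = 0}}

/-- z-filters on `F`. -/
def IsZFilter (𝒜 : Set (Set S)) : Prop :=
  𝒜 ⊆ ZSet S F ∧ ∅ ∉ 𝒜 ∧ Set.univ ∈ 𝒜 ∧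
    (∀ A ∈ 𝒜, ∀ B ∈ 𝒜, A ∩ B ∈ 𝒜) ∧
    ∀ A ∈ 𝒜, ∀ B ∈ ZSet S F, A ⊆ B → B ∈ 𝒜

/-- `FS`: the collection of z-ultrafilters on `F`. -/
def zUltra : Set (Set (Set S)) :=
  {p | IsZFilter S F p ∧ ∀ q, IsZFilter S F q → p ⊆ q → q = p}

/-- `cl ε(A)` in `S^F`. -/
def epsCl (A : Set S) : Set (specF S F) := closure (epsF S F '' A)

/-- `⋂_{A ∈ p} cl ε(A)`; for `p ∈ FS` this is the singleton of the corresponding point of `S^F`. -/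
def core (p : Set (Set S)) : Set (specF S F) := ⋂ A ∈ p, epsCl S F A

/-- `p̃ = ⋂ [p]`, the intersection of the equivalence class of `p`. -/
def tilde (p : Set (Set S)) : Set (Set S) :=
  ⋂₀ {q | q ∈ zUltra S F ∧ core S F q = core S F p}

/-- pure z-filters. -/
def IsPure (𝒜 : Set (Set S)) : Prop :=
  IsZFilter S F 𝒜 ∧ ∀ p ∈ zUltra S F, 𝒜 ⊆ p → 𝒜 ⊆ tilde S F p

/-- `bar(𝒜) = {p̃ : 𝒜 ⊆ p}`, viewed as a subset of `S^F` via the identification of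
`p̃` with the point `μ` such that `⋂_{A ∈ p} cl ε(A) = {μ}`. -/
def barSet (𝒜 : Set (Set S)) : Set (specF S F) :=
  {μ | ∃ p ∈ zUltra S F, 𝒜 ⊆ p ∧ core S F p = {μ}}

/-- `𝒜° = {A ∈ 𝒜 : bar(𝒜) ⊆ int cl ε(A)}`. -/
def circA (𝒜 : Set (Set S)) : Set (Set S) :=
  {A ∈ 𝒜 | barSet S F 𝒜 ⊆ interior (epsCl S F A)}

/-- `⋂ J`, the intersection of the z-filters `p̃` corresponding to points of `J ⊆ S^F`. -/
def interOf (J : Set (specF S F)) : Set (Set S) :=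
  ⋂₀ {C | ∃ p ∈ zUltra S F, ∃ μ ∈ J, core S F p = {μ} ∧ C = tilde S F p}

/-- `⋂ [p̃]_R` for a relation `r` on `S^F`. -/
def classInter (r : specF S F → specF S F → Prop) (μ : specF S F) : Set (Set S) :=
  interOf S F {ν | r μ ν}

/-- `Ω_ℬ(A) = {x ∈ S : λ_x⁻¹(A) ∈ ℬ}`. -/
def OmegaZ (ℬ : Set (Set S)) (A : Set S) : Set S := {x : S | (fun t => x * t) ⁻¹' A ∈ ℬ}

/-- `𝒜 + ℬ`. -/
def zsum (𝒜 ℬ : Set (Set S)) : Set (Set S) :=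
  {A ∈ ZSet S F | ∀ F' ∈ ZSet S F, OmegaZ S ℬ A ⊆ F' → F' ∈ 𝒜}

/-- `𝒜 ⊙ ℬ = ⋂ bar(𝒜 + ℬ)`. -/
def odot (𝒜 ℬ : Set (Set S)) : Set (Set S) :=
  interOf S F (barSet S F (zsum S F 𝒜 ℬ))

/-- topological choice functions for a set `Γ` of z-filters. -/
def IsTCF (Γ : Set (Set (Set S))) (f : Set (Set S) → Set S) : Prop :=
  ∀ L ∈ Γ, f L ∈ L ∧ barSet S F L ⊆ interior (epsCl S F (f L))

/-- `A* = {𝓛 ∈ Γ : bar(𝓛) ∩ cl ε(A) ≠ ∅}`. -/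
def starSet (Γ : Set (Set (Set S))) (A : Set S) : Set Γ :=
  {L : Γ | (barSet S F (L : Set (Set S)) ∩ epsCl S F A).Nonempty}

/-- `A_* = {𝓛 ∈ Γ : bar(𝓛) ⊆ cl ε(A)}`. -/
def lowStar (Γ : Set (Set (Set S))) (A : Set S) : Set Γ :=
  {L : Γ | barSet S F (L : Set (Set S)) ⊆ epsCl S F A}

/-- The `τ*` quotient topology on `Γ`. -/
def tauStar (Γ : Set (Set (Set S))) : TopologicalSpace Γ :=
  TopologicalSpace.generateFrom {U | ∃ A ∈ ZSet S F, U = (starSet S F Γ A)ᶜ}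

/-- The `τ_*` quotient topology on `Γ`. -/
def tauLow (Γ : Set (Set (Set S))) : TopologicalSpace Γ :=
  TopologicalSpace.generateFrom {U | ∃ A ∈ ZSet S F, U = (lowStar S F Γ A)ᶜ}

/-- `Γ` is a quotient of `S^F`: conditions (a) and (b) of Theorem 3.9. -/
def IsQuotientOf (Γ : Set (Set (Set S))) : Prop :=
  (∀ L ∈ Γ, IsPure S F L) ∧
  (∀ f : Set (Set S) → Set S, IsTCF S F Γ f →
    ∃ 𝓕 : Finset (Set (Set S)), ↑𝓕 ⊆ Γ ∧
      (Set.univ : Set (specF S F)) = ⋃ L ∈ 𝓕, interior (epsCl S F (f L))) ∧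
  (∀ L ∈ Γ, ∀ K ∈ Γ, L ≠ K →
    ∃ A ∈ circA S F L, ∃ B ∈ circA S F K, ∀ C ∈ Γ,
      (∀ H ∈ ZSet S F, (interior (epsCl S F A))ᶜ ⊆ interior (epsCl S F H) → H ∈ C) ∨
      (∀ T ∈ ZSet S F, (interior (epsCl S F B))ᶜ ⊆ interior (epsCl S F T) → T ∈ C))

/-- The defining property of the map `γ : S^F → Γ` sending `p̃` to the unique member of `Γ`
contained in `p̃`. -/
def IsGamma (Γ : Set (Set (Set S))) (γ : specF S F → Γ) : Prop :=
  ∀ (μ : specF S F) (p : Set (Set S)), p ∈ zUltra S F → core S F p = {μ} →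
    (γ μ : Set (Set S)) ⊆ tilde S F p

/-- The defining property of the multiplication of `S^F`: `(μν)(f) = μ(T_ν f)` where
`(T_ν f)(s) = ν(L_s f)`. -/
def IsSpecMul (mul : specF S F → specF S F → specF S F) : Prop :=
  ∀ (μ ν : specF S F) (f : S →ᵇ ℂ) (hf : f ∈ F.carrier) (g : S →ᵇ ℂ) (hg : g ∈ F.carrier),
    (∀ s : S, g s = ν ⟨f.compContinuous (lamC S hl s), F.leftInvariant s f hf⟩) →
    mul μ ν ⟨f, hf⟩ = μ ⟨g, hg⟩

/-- `LMC(S)`, as a subset of `CB(S)`. -/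
def LMCset (hl : ∀ s : S, Continuous (fun t => s * t)) : Set (S →ᵇ ℂ) :=
  {f | ∀ μ : characterSpace ℂ (S →ᵇ ℂ),
    Continuous fun s : S => μ (f.compContinuous (lamC S hl s))}


set_option maxHeartbeats 1600000
set_option synthInstance.maxHeartbeats 1000000
set_option linter.unusedSectionVars false

section AuxProofs

open NormedSpace in
/-- evaluation formula -/
theorem epsF_eval (s : S) (f : F.carrier) : epsF S F s f = (f : S →ᵇ ℂ) s := rfl

theorem nonempty_S (μ : specF S F) : Nonempty S := by
  by_contra h
  have h1 : (1 : F.carrier) = 0 := by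
    apply Subtype.ext
    ext x
    exact absurd ⟨x⟩ h
  have h2 : μ (1 : F.carrier) = 1 := map_one μ
  rw [h1, map_zero] at h2
  exact one_ne_zero h2.symm

theorem norm_one_carrier [Nonempty S] : ‖(1 : F.carrier)‖ = 1 := by
  have : ‖((1 : F.carrier) : S →ᵇ ℂ)‖ = 1 := norm_one
  exact this

theorem char_norm_le (μ : specF S F) (g : F.carrier) : ‖μ g‖ ≤ ‖g‖ := by
  haveI : CompleteSpace F.carrier := F.isClosed'.completeSpace_coe
  haveI : Nonempty S := nonempty_S S F μ
  have h2 := WeakDual.CharacterSpace.norm_le_norm_one μ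
  calc ‖μ g‖ = ‖(WeakDual.toStrongDual (μ : WeakDual ℂ F.carrier)) g‖ := rfl
    _ ≤ ‖WeakDual.toStrongDual (μ : WeakDual ℂ F.carrier)‖ * ‖g‖ :=
        ContinuousLinearMap.le_opNorm _ _
    _ ≤ 1 * ‖g‖ := by
        rw [← norm_one_carrier S F]
        exact mul_le_mul_of_nonneg_right h2 (norm_nonneg _)
    _ = ‖g‖ := one_mul _

theorem char_star (μ : specF S F) (f : F.carrier) :
    μ (star f) = (starRingEnd ℂ) (μ f) := by
  haveI : CompleteSpace F.carrier := F.isClosed'.completeSpace_coe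
  haveI : Nonempty S := nonempty_S S F μ
  haveI hCS : ContinuousStar F.carrier :=
    ⟨continuous_induced_rng.2 (continuous_star.comp continuous_subtype_val)⟩
  letI : NormedAlgebra ℚ F.carrier := NormedAlgebra.restrictScalars ℚ ℂ F.carrier
  have hselfadj : ∀ u : F.carrier, star u = u → (μ u).im = 0 := by
    intro u hu
    by_contra him
    have key : ∀ t : ℝ, Real.exp (-(t * (μ u).im)) ≤ 1 := by
      intro t
      set z : ℂ := (t : ℂ) * Complex.I with hz
      set v : F.carrier := z • u with hv
      have hsz : star z = -z := by
        calc star z = (starRingEnd ℂ) ((t : ℂ) * Complex.I) := by rw [hz]; rfl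
          _ = (t : ℂ) * -Complex.I := by rw [map_mul, Complex.conj_ofReal, Complex.conj_I]
          _ = -z := by rw [hz]; ring
      have hsv : star v = -v := by
        rw [hv, star_smul, hu, hsz, neg_smul]
      have h1 : star (NormedSpace.exp v) * NormedSpace.exp v = 1 := by
        rw [NormedSpace.star_exp, hsv, ← NormedSpace.exp_add_of_commute
          (Commute.neg_left (Commute.refl v)), neg_add_cancel, NormedSpace.exp_zero]
      have hn2 : ‖NormedSpace.exp v‖ * ‖NormedSpace.exp v‖ = 1 := by
        rw [← CStarRing.norm_star_mul_self, h1, norm_one_carrier S F]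
      have hn : ‖NormedSpace.exp v‖ = 1 := by
        nlinarith [norm_nonneg (NormedSpace.exp v)]
      have hm : μ (NormedSpace.exp v) = Complex.exp (μ v) := by
        rw [NormedSpace.map_exp μ (map_continuous μ) v, Complex.exp_eq_exp_ℂ]
      have hμv : μ v = z * μ u := by rw [hv, map_smul, smul_eq_mul]
      have habs : ‖Complex.exp (μ v)‖ = Real.exp (-(t * (μ u).im)) := by
        rw [Complex.norm_exp]
        congr 1
        rw [hμv, hz]
        simp [Complex.mul_re, Complex.mul_im]
      have hle : ‖μ (NormedSpace.exp v)‖ ≤ 1 := hn ▸ char_norm_le S F μ _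
      rw [hm, habs] at hle
      exact hle
    have h1 := key (-(1 / (μ u).im))
    rw [show -(-(1 / (μ u).im) * (μ u).im) = 1 by field_simp] at h1
    have := Real.add_one_lt_exp (one_ne_zero (α := ℝ))
    linarith
  obtain ⟨u, hu_def⟩ : ∃ u : F.carrier, u = f + star f := ⟨_, rfl⟩
  obtain ⟨w, hw_def⟩ : ∃ w : F.carrier, w = Complex.I • (f - star f) := ⟨_, rfl⟩
  have hu : star u = u := by rw [hu_def, star_add, star_star, add_comm]
  have hw : star w = w := by
    rw [hw_def, star_smul, star_sub, star_star, Complex.star_def, Complex.conj_I]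
    module
  have hru := hselfadj u hu
  have hrw := hselfadj w hw
  have h2 : μ u - Complex.I * μ w = 2 * μ f := by
    have hrel : u - Complex.I • w = (2 : ℂ) • f := by
      rw [hu_def, hw_def, smul_smul, Complex.I_mul_I]
      module
    calc μ u - Complex.I * μ w = μ (u - Complex.I • w) := by
          rw [map_sub, map_smul, smul_eq_mul]
      _ = 2 * μ f := by rw [hrel, map_smul, smul_eq_mul]
  have h1 : μ (star f) = μ u - μ f := by rw [hu_def, map_add]; ring
  rw [h1]
  have h2re := congrArg Complex.re h2
  have h2im := congrArg Complex.im h2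
  simp [Complex.sub_re, Complex.sub_im, Complex.mul_re, Complex.mul_im, hru, hrw] at h2re h2im
  apply Complex.ext
  · simp [Complex.sub_re, hru]
    linarith
  · simp [Complex.sub_im, hru]

theorem exists_char_rep (h : C(specF S F, ℂ)) :
    ∃ f : F.carrier, ∀ μ : specF S F, μ f = h μ := by
  haveI : CompleteSpace F.carrier := F.isClosed'.completeSpace_coe
  rcases isEmpty_or_nonempty (specF S F) with hX | hX
  · exact ⟨0, fun μ => (hX.false μ).elim⟩
  · haveI : Nonempty S := nonempty_S S F (Classical.arbitrary _)
    haveI : CompactSpace (specF S F) := inferInstance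
    set Φ := gelfandTransform ℂ F.carrier with hΦ
    have hiso : Isometry Φ := by
      refine AddMonoidHomClass.isometry_of_norm Φ (fun g => le_antisymm ?_ ?_)
      · exact (ContinuousMap.norm_le _ (norm_nonneg g)).2 fun μ => char_norm_le S F μ g
      · have : ∀ s : S, ‖(g : S →ᵇ ℂ) s‖ ≤ ‖Φ g‖ := fun s => by
          calc ‖(g : S →ᵇ ℂ) s‖ = ‖Φ g (epsF S F s)‖ := rfl
            _ ≤ ‖Φ g‖ := (Φ g).norm_coe_le_norm _
        calc ‖g‖ = ‖(g : S →ᵇ ℂ)‖ := rfl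
          _ ≤ ‖Φ g‖ := (BoundedContinuousFunction.norm_le (norm_nonneg _)).2 this
    set rng : StarSubalgebra ℂ C(specF S F, ℂ) :=
      { toSubalgebra := Φ.range
        star_mem' := by
          rintro - ⟨a, rfl⟩
          refine ⟨star a, ?_⟩
          ext1 φ
          show φ (star a) = star (Φ a φ)
          rw [char_star S F φ a]
          rfl } with hrng
    have hclosed : rng.topologicalClosure = rng :=
      le_antisymm
        (StarSubalgebra.topologicalClosure_minimal le_rfl
          hiso.isClosedEmbedding.isClosed_range)
        (StarSubalgebra.le_topologicalClosure _)
    have htop : rng = ⊤ := by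
      rw [← hclosed]
      refine ContinuousMap.starSubalgebra_topologicalClosure_eq_top_of_separatesPoints
        _ (fun x y hxy => ?_)
      by_contra hcon
      push_neg at hcon
      refine hxy (Subtype.ext (ContinuousLinearMap.ext fun a => ?_))
      exact hcon (Φ a) ⟨Φ a, ⟨a, rfl⟩, rfl⟩
    have hmem : h ∈ Φ.range := by
      have : h ∈ rng := htop ▸ StarSubalgebra.mem_top
      exact this
    obtain ⟨f, hf⟩ := hmem
    exact ⟨f, fun μ => by rw [← hf]; rfl⟩

theorem denseRange_epsF : DenseRange (epsF S F) := by
  haveI : CompleteSpace F.carrier := F.isClosed'.completeSpace_coe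
  intro x
  by_contra hx
  haveI : CompactSpace (specF S F) := inferInstance
  obtain ⟨φ, hφ0, hφ1, -⟩ :=
    exists_continuous_zero_one_of_isClosed (isClosed_closure (s := Set.range (epsF S F)))
      (isClosed_singleton (x := x)) (Set.disjoint_singleton_right.2 hx)
  set h : C(specF S F, ℂ) := ⟨fun y => ((φ y : ℝ) : ℂ),
    Complex.continuous_ofReal.comp (map_continuous φ)⟩ with hh
  obtain ⟨f, hf⟩ := exists_char_rep S F h
  have hf0 : ∀ s : S, (f : S →ᵇ ℂ) s = 0 := by
    intro s
    have h1 : (f : S →ᵇ ℂ) s = h (epsF S F s) := hf (epsF S F s)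
    rw [h1]
    have h2 : φ (epsF S F s) = 0 := hφ0 (subset_closure (Set.mem_range_self s))
    simp [hh, h2]
  have hfz : f = 0 := Subtype.ext (by ext s; exact hf0 s)
  have h3 := hf x
  rw [hfz, map_zero] at h3
  have h4 : φ x = 1 := hφ1 rfl
  simp [hh, h4] at h3

theorem zset_univ : Set.univ ∈ ZSet S F := by
  refine ⟨0, zero_mem _, ?_⟩
  ext s
  simp

theorem zset_inter (A B : Set S) (hA : A ∈ ZSet S F) (hB : B ∈ ZSet S F) :
    A ∩ B ∈ ZSet S F := by
  obtain ⟨f, hf, rfl⟩ := hA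
  obtain ⟨g, hg, rfl⟩ := hB
  refine ⟨star f * f + star g * g, add_mem (mul_mem (star_mem hf) hf) (mul_mem (star_mem hg) hg), ?_⟩
  ext s
  simp only [Set.mem_inter_iff, Set.mem_setOf_eq, BoundedContinuousFunction.coe_add,
    BoundedContinuousFunction.coe_mul, Pi.add_apply, Pi.mul_apply]
  rw [show (star f) s = (starRingEnd ℂ) (f s) from rfl,
    show (star g) s = (starRingEnd ℂ) (g s) from rfl,
    ← Complex.normSq_eq_conj_mul_self, ← Complex.normSq_eq_conj_mul_self,
    ← Complex.ofReal_add, Complex.ofReal_eq_zero]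
  constructor
  · rintro ⟨h1, h2⟩
    simp [h1, h2]
  · intro hsum
    have h1 := (add_eq_zero_iff_of_nonneg (Complex.normSq_nonneg _)
      (Complex.normSq_nonneg _)).1 hsum
    exact ⟨Complex.normSq_eq_zero.1 h1.1, Complex.normSq_eq_zero.1 h1.2⟩

theorem zset_union (A B : Set S) (hA : A ∈ ZSet S F) (hB : B ∈ ZSet S F) :
    A ∪ B ∈ ZSet S F := by
  obtain ⟨f, hf, rfl⟩ := hA
  obtain ⟨g, hg, rfl⟩ := hB
  refine ⟨f * g, mul_mem hf hg, ?_⟩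
  ext s
  simp [mul_eq_zero]

theorem epsCl_mono {A B : Set S} (h : A ⊆ B) : epsCl S F A ⊆ epsCl S F B :=
  closure_mono (Set.image_mono h)

theorem zset_of_le (ψ : C(specF S F, ℝ)) (c : ℝ) :
    {s : S | ψ (epsF S F s) ≤ c} ∈ ZSet S F ∧
    epsCl S F {s : S | ψ (epsF S F s) ≤ c} ⊆ {x | ψ x ≤ c} ∧
    {x | ψ x < c} ⊆ interior (epsCl S F {s : S | ψ (epsF S F s) ≤ c}) := by
  set h : C(specF S F, ℂ) := ⟨fun x => ((max (ψ x - c) 0 : ℝ) : ℂ),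
    Complex.continuous_ofReal.comp (((map_continuous ψ).sub continuous_const).max
      continuous_const)⟩ with hh
  obtain ⟨f, hf⟩ := exists_char_rep S F h
  have hval : ∀ s : S, (f : S →ᵇ ℂ) s = ((max (ψ (epsF S F s) - c) 0 : ℝ) : ℂ) :=
    fun s => hf (epsF S F s)
  have hAeq : {s : S | ψ (epsF S F s) ≤ c} = {s : S | (f : S →ᵇ ℂ) s = 0} := by
    ext s
    rw [Set.mem_setOf_eq, Set.mem_setOf_eq, hval s]
    rw [Complex.ofReal_eq_zero, max_eq_right_iff, sub_nonpos]
  refine ⟨⟨(f : S →ᵇ ℂ), f.2, hAeq⟩, ?_, ?_⟩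
  · apply closure_minimal
    · rintro - ⟨s, hs, rfl⟩
      exact hs
    · exact isClosed_le (map_continuous ψ) continuous_const
  · intro x hx
    rw [mem_interior]
    refine ⟨{y | ψ y < c}, ?_, isOpen_lt (map_continuous ψ) continuous_const, hx⟩
    intro y hy
    rw [epsCl, mem_closure_iff]
    intro V hV hyV
    obtain ⟨s, hs⟩ := (denseRange_epsF S F).exists_mem_open
      (hV.inter (isOpen_lt (map_continuous ψ) continuous_const)) ⟨y, hyV, hy⟩
    exact ⟨epsF S F s, ⟨hs.1, ⟨s, show ψ (epsF S F s) ≤ c from le_of_lt hs.2, rfl⟩⟩⟩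

theorem exists_ultra (𝒜 : Set (Set S)) (h : IsZFilter S F 𝒜) :
    ∃ p ∈ zUltra S F, 𝒜 ⊆ p := by
  have hchainU : ∀ c ⊆ {q | IsZFilter S F q ∧ 𝒜 ⊆ q}, IsChain (· ⊆ ·) c → c.Nonempty →
      ∃ ub ∈ {q | IsZFilter S F q ∧ 𝒜 ⊆ q}, ∀ s ∈ c, s ⊆ ub := by
    intro c hcT hchain hcne
    refine ⟨⋃₀ c, ⟨⟨?_, ?_, ?_, ?_, ?_⟩, ?_⟩, fun s hs => subset_sUnion_of_mem hs⟩
    · rintro A ⟨q, hq, hAq⟩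
      exact (hcT hq).1.1 hAq
    · rintro ⟨q, hq, hqE⟩
      exact (hcT hq).1.2.1 hqE
    · obtain ⟨q, hq⟩ := hcne
      exact ⟨q, hq, (hcT hq).1.2.2.1⟩
    · rintro A ⟨q, hq, hAq⟩ B ⟨r, hr, hBr⟩
      rcases hchain.total hq hr with hle | hle
      · exact ⟨r, hr, (hcT hr).1.2.2.2.1 A (hle hAq) B hBr⟩
      · exact ⟨q, hq, (hcT hq).1.2.2.2.1 A hAq B (hle hBr)⟩
    · rintro A ⟨q, hq, hAq⟩ B hBZ hAB
      exact ⟨q, hq, (hcT hq).1.2.2.2.2 A hAq B hBZ hAB⟩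
    · obtain ⟨q, hq⟩ := hcne
      exact (hcT hq).2.trans (subset_sUnion_of_mem hq)
  obtain ⟨m, hm𝒜, hmax⟩ := zorn_subset_nonempty {q | IsZFilter S F q ∧ 𝒜 ⊆ q} hchainU 𝒜
    ⟨h, subset_rfl⟩
  exact ⟨m, ⟨hmax.1.1, fun q hq hmq =>
    subset_antisymm (hmax.2 ⟨hq, hm𝒜.trans hmq⟩ hmq) hmq⟩, hm𝒜⟩

theorem mem_ultra_of_inter (p : Set (Set S)) (hp : p ∈ zUltra S F) (Z : Set S)
    (hZ : Z ∈ ZSet S F) (h : ∀ B ∈ p, (Z ∩ B).Nonempty) : Z ∈ p := by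
  obtain ⟨⟨hpZ, hpE, hpu, hpi, hpup⟩, hpmax⟩ := hp
  set q : Set (Set S) := {C | C ∈ ZSet S F ∧ ∃ B ∈ p, Z ∩ B ⊆ C} with hqdef
  have hq : IsZFilter S F q := by
    refine ⟨fun C hC => hC.1, ?_, ⟨zset_univ S F, Set.univ, hpu, Set.subset_univ _⟩, ?_, ?_⟩
    · rintro ⟨-, B, hB, hsub⟩
      exact (h B hB).ne_empty (Set.subset_empty_iff.1 hsub)
    · rintro A ⟨hAZ, B, hB, hsubA⟩ A' ⟨hA'Z, B', hBne, hsubA'⟩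
      exact ⟨zset_inter S F _ _ hAZ hA'Z, B ∩ B', hpi _ hB _ hBne,
        fun s hs => ⟨hsubA ⟨hs.1, hs.2.1⟩, hsubA' ⟨hs.1, hs.2.2⟩⟩⟩
    · rintro A ⟨hAZ, B, hB, hsub⟩ B' hBneZ hAB'
      exact ⟨hBneZ, B, hB, hsub.trans hAB'⟩
  have hpq : p ⊆ q := fun B hB => ⟨hpZ hB, B, hB, Set.inter_subset_right⟩
  have heq := hpmax q hq hpq
  rw [← heq]
  exact ⟨hZ, Set.univ, hpu, by simp⟩

theorem core_nonempty (p : Set (Set S)) (hp : IsZFilter S F p) :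
    (core S F p).Nonempty := by
  haveI : CompleteSpace F.carrier := F.isClosed'.completeSpace_coe
  haveI : CompactSpace (specF S F) := inferInstance
  obtain ⟨hpZ, hpE, hpu, hpi, hpup⟩ := hp
  haveI : Nonempty p := ⟨⟨Set.univ, hpu⟩⟩
  have key := IsCompact.nonempty_iInter_of_directed_nonempty_isCompact_isClosed
    (fun A : p => epsCl S F (A : Set S)) ?_ ?_ ?_ ?_
  · obtain ⟨x, hx⟩ := key
    refine ⟨x, ?_⟩
    show x ∈ ⋂ A ∈ p, epsCl S F A
    rw [Set.biInter_eq_iInter]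
    exact hx
  · intro A B
    refine ⟨⟨(A : Set S) ∩ B, hpi _ A.2 _ B.2⟩, ?_, ?_⟩
    · exact epsCl_mono S F Set.inter_subset_left
    · exact epsCl_mono S F Set.inter_subset_right
  · intro A
    have hA : (A : Set S).Nonempty :=
      Set.nonempty_iff_ne_empty.2 (fun h0 => hpE (h0 ▸ A.2))
    exact (hA.image _).mono subset_closure
  · exact fun A => isClosed_closure.isCompact
  · exact fun A => isClosed_closure

theorem exists_ultra_core (𝒜 : Set (Set S)) (h𝒜 : IsZFilter S F 𝒜) (ν : specF S F)
    (hν : ∀ A ∈ 𝒜, ν ∈ epsCl S F A) :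
    ∃ p ∈ zUltra S F, 𝒜 ⊆ p ∧ core S F p = {ν} := by
  haveI : CompleteSpace F.carrier := F.isClosed'.completeSpace_coe
  haveI : CompactSpace (specF S F) := inferInstance
  obtain ⟨h𝒜Z, hAE, h𝒜u, h𝒜i, h𝒜up⟩ := h𝒜
  set 𝒟 : Set (Set S) := {C | C ∈ ZSet S F ∧ ∃ A ∈ 𝒜, ∃ U : Set (specF S F),
    IsOpen U ∧ ν ∈ U ∧ A ∩ (epsF S F ⁻¹' U) ⊆ C} with h𝒟def
  have hpieces : ∀ A, A ∈ 𝒜 → ∀ U : Set (specF S F), IsOpen U → ν ∈ U →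
      (A ∩ epsF S F ⁻¹' U).Nonempty := by
    intro A hA U hU hνU
    obtain ⟨x, hxU, s, hsA, rfl⟩ := mem_closure_iff.1 (hν A hA) U hU hνU
    exact ⟨s, hsA, hxU⟩
  have h𝒟F : IsZFilter S F 𝒟 := by
    refine ⟨fun C hC => hC.1, ?_, ?_, ?_, ?_⟩
    · rintro ⟨-, A, hA, U, hU, hνU, hsub⟩
      obtain ⟨s, hs⟩ := hpieces A hA U hU hνU
      exact hsub hs
    · exact ⟨zset_univ S F, Set.univ, h𝒜u, Set.univ, isOpen_univ, Set.mem_univ ν,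
        Set.subset_univ _⟩
    · rintro C ⟨hCZ, A, hA, U, hU, hνU, hsub⟩ C' ⟨hCneZ, A', hA', U', hU', hνU', hsub'⟩
      exact ⟨zset_inter S F _ _ hCZ hCneZ, A ∩ A', h𝒜i _ hA _ hA', U ∩ U', hU.inter hU',
        ⟨hνU, hνU'⟩, fun s hs => ⟨hsub ⟨hs.1.1, hs.2.1⟩, hsub' ⟨hs.1.2, hs.2.2⟩⟩⟩
    · rintro C ⟨hCZ, A, hA, U, hU, hνU, hsub⟩ B hBZ hCB
      exact ⟨hBZ, A, hA, U, hU, hνU, hsub.trans hCB⟩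
  have h𝒜𝒟 : 𝒜 ⊆ 𝒟 := fun A hA =>
    ⟨h𝒜Z hA, A, hA, Set.univ, isOpen_univ, Set.mem_univ ν, fun s hs => hs.1⟩
  obtain ⟨p, hp, h𝒟p⟩ := exists_ultra S F 𝒟 h𝒟F
  refine ⟨p, hp, h𝒜𝒟.trans h𝒟p, ?_⟩
  have hsub : core S F p ⊆ {ν} := by
    intro ρ hρ
    by_contra hρν
    rw [Set.mem_singleton_iff] at hρν
    obtain ⟨φ, hφ0, hφ1, -⟩ := exists_continuous_zero_one_of_isClosed
      (isClosed_singleton (x := ν)) (isClosed_singleton (x := ρ))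
      (Set.disjoint_singleton.2 (fun hc => hρν hc.symm))
    obtain ⟨hZ, hcl, -⟩ := zset_of_le S F φ (1/2)
    have hC𝒟 : {s : S | φ (epsF S F s) ≤ 1/2} ∈ 𝒟 := by
      refine ⟨hZ, Set.univ, h𝒜u, {x | φ x < 1/2},
        isOpen_lt (map_continuous φ) continuous_const, ?_,
        fun s hs => show φ (epsF S F s) ≤ 1/2 from le_of_lt hs.2⟩
      have : φ ν = 0 := hφ0 rfl
      simp [this]
    have hρcl : ρ ∈ epsCl S F {s | φ (epsF S F s) ≤ 1/2} :=
      (Set.mem_iInter₂.1 hρ) _ (h𝒟p hC𝒟)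
    have hle : φ ρ ≤ 1/2 := hcl hρcl
    have h1 : φ ρ = 1 := hφ1 rfl
    linarith
  have hne := core_nonempty S F p hp.1
  rcases Set.subset_singleton_iff_eq.1 hsub with h | h
  · rw [h] at hne
    exact absurd hne (by simp)
  · exact h

theorem mem_barSet_of_forall (𝒜 : Set (Set S)) (h𝒜 : IsZFilter S F 𝒜) (ν : specF S F)
    (hν : ∀ A ∈ 𝒜, ν ∈ epsCl S F A) : ν ∈ barSet S F 𝒜 := by
  obtain ⟨p, hp, h𝒜p, hcore⟩ := exists_ultra_core S F 𝒜 h𝒜 ν hν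
  exact ⟨p, hp, h𝒜p, hcore⟩

theorem core_singleton_of_ultra (p : Set (Set S)) (hp : p ∈ zUltra S F) :
    ∃ μ, core S F p = {μ} := by
  haveI : CompleteSpace F.carrier := F.isClosed'.completeSpace_coe
  haveI : CompactSpace (specF S F) := inferInstance
  obtain ⟨μ, hμ⟩ := core_nonempty S F p hp.1
  refine ⟨μ, Set.eq_singleton_iff_unique_mem.2 ⟨hμ, fun ν hν => ?_⟩⟩
  by_contra hνμ
  obtain ⟨φ, hφ0, hφ1, -⟩ := exists_continuous_zero_one_of_isClosed
    (isClosed_singleton (x := μ)) (isClosed_singleton (x := ν))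
    (Set.disjoint_singleton.2 (fun hc => hνμ hc.symm))
  obtain ⟨hZA, hclA, -⟩ := zset_of_le S F φ (1/2)
  obtain ⟨hZA', hclA', -⟩ := zset_of_le S F (-φ) (-(1/2))
  set A := {s : S | φ (epsF S F s) ≤ 1/2} with hAdef
  set A' := {s : S | (-φ) (epsF S F s) ≤ -(1/2)} with hA'def
  have hunion : A ∪ A' = Set.univ := by
    ext s
    simp only [Set.mem_union, hAdef, hA'def, Set.mem_setOf_eq, ContinuousMap.neg_apply,
      neg_le_neg_iff, Set.mem_univ, iff_true]
    exact le_total _ _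
  have hmem : A ∈ p ∨ A' ∈ p := by
    by_contra hno
    push_neg at hno
    have hB : ∃ B ∈ p, A ∩ B = ∅ := by
      by_contra hBne
      push_neg at hBne
      exact hno.1 (mem_ultra_of_inter S F p hp A hZA (fun B hB => hBne B hB))
    have hC : ∃ C ∈ p, A' ∩ C = ∅ := by
      by_contra hCne
      push_neg at hCne
      exact hno.2 (mem_ultra_of_inter S F p hp A' hZA' (fun B hB => hCne B hB))
    obtain ⟨B, hBp, hAB⟩ := hB
    obtain ⟨C, hCp, hA'C⟩ := hC
    have hBC : B ∩ C ∈ p := hp.1.2.2.2.1 B hBp C hCp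
    have hBCne : (B ∩ C).Nonempty :=
      Set.nonempty_iff_ne_empty.2 (fun h0 => hp.1.2.1 (h0 ▸ hBC))
    obtain ⟨s, hsB, hsC⟩ := hBCne
    have hs : s ∈ A ∪ A' := hunion ▸ Set.mem_univ s
    rcases hs with hs | hs
    · exact absurd (Set.mem_inter hs hsB) (hAB ▸ Set.notMem_empty s)
    · exact absurd (Set.mem_inter hs hsC) (hA'C ▸ Set.notMem_empty s)
  rcases hmem with hm | hm
  · have : ν ∈ epsCl S F A := (Set.mem_iInter₂.1 hν) _ hm
    have hle : φ ν ≤ 1/2 := hclA this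
    have h1 : φ ν = 1 := hφ1 rfl
    linarith
  · have : μ ∈ epsCl S F A' := (Set.mem_iInter₂.1 hμ) _ hm
    have hle : (-φ) μ ≤ -(1/2) := hclA' this
    have h0 : φ μ = 0 := hφ0 rfl
    simp only [ContinuousMap.neg_apply, h0] at hle
    linarith

theorem tilde_subset_self (p : Set (Set S)) (hp : p ∈ zUltra S F) :
    tilde S F p ⊆ p :=
  Set.sInter_subset_of_mem ⟨hp, rfl⟩

theorem tilde_congr (p q : Set (Set S)) (h : core S F p = core S F q) :
    tilde S F p = tilde S F q := by
  unfold tilde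
  rw [h]

end AuxProofs

/-- Theorem 3.2, (a) ↔ (a'). -/
theorem statement0
    (hr : ∀ s : S, Continuous (fun t => t * s))
    (hF : (F.carrier : Set (S →ᵇ ℂ)) = LMCset S hl)
    (Γ : Set (Set (Set S))) (hΓ : ∀ L ∈ Γ, IsPure S F L) :
    (∀ f : Set (Set S) → Set S, IsTCF S F Γ f →
        ∃ 𝓕 : Finset (Set (Set S)), ↑𝓕 ⊆ Γ ∧
          (Set.univ : Set (specF S F)) = ⋃ L ∈ 𝓕, interior (epsCl S F (f L))) ↔
      (∀ p ∈ zUltra S F, ∃ L ∈ Γ, L ⊆ tilde S F p) := by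
  classical
  constructor
  · intro ha p hp
    by_contra hcon
    push_neg at hcon
    obtain ⟨μ, hμcore⟩ := core_singleton_of_ultra S F p hp
    have key : ∀ L ∈ Γ, ∃ A, A ∈ L ∧ barSet S F L ⊆ interior (epsCl S F A) ∧
        μ ∉ interior (epsCl S F A) := by
      intro L hLΓ
      haveI : CompleteSpace F.carrier := F.isClosed'.completeSpace_coe
      haveI : CompactSpace (specF S F) := inferInstance
      have hLz : IsZFilter S F L := (hΓ L hLΓ).1
      have hμbar : μ ∉ barSet S F L := by
        rintro ⟨q, hq, hLq, hqcore⟩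
        have h1 := (hΓ L hLΓ).2 q hq hLq
        rw [tilde_congr S F q p (by rw [hqcore, hμcore])] at h1
        exact hcon L hLΓ h1
      obtain ⟨A₀, hA₀L, hA₀⟩ : ∃ A₀ ∈ L, μ ∉ epsCl S F A₀ := by
        by_contra hno
        push_neg at hno
        exact hμbar (mem_barSet_of_forall S F L hLz μ hno)
      have hK'c : IsClosed (⋂ A ∈ L, epsCl S F A) :=
        isClosed_biInter (fun A _ => isClosed_closure)
      have hμK' : μ ∉ ⋂ A ∈ L, epsCl S F A :=
        fun hmem => hA₀ ((Set.mem_iInter₂.1 hmem) A₀ hA₀L)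
      obtain ⟨φ, hφ0, hφ1, -⟩ := exists_continuous_zero_one_of_isClosed hK'c
        (isClosed_singleton (x := μ)) (Set.disjoint_singleton_right.2 hμK')
      obtain ⟨hZ, hcl, hint⟩ := zset_of_le S F φ (1/2)
      set A' := {s : S | φ (epsF S F s) ≤ 1/2} with hA'def
      refine ⟨A₀ ∪ A', hLz.2.2.2.2 A₀ hA₀L _ (zset_union S F _ _ (hLz.1 hA₀L) hZ)
        Set.subset_union_left, ?_, ?_⟩
      · intro ν hνbar
        have hνK' : ν ∈ ⋂ A ∈ L, epsCl S F A := by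
          obtain ⟨q, hq, hLq, hqcore⟩ := hνbar
          have hνcore : ν ∈ core S F q := by rw [hqcore]; exact Set.mem_singleton ν
          have hνcore' : ν ∈ ⋂ A ∈ q, epsCl S F A := hνcore
          exact Set.mem_iInter₂.2 fun A hA => (Set.mem_iInter₂.1 hνcore') A (hLq hA)
        have hφν : φ ν = 0 := hφ0 hνK'
        have hmem' : ν ∈ interior (epsCl S F A') :=
          hint (by rw [Set.mem_setOf_eq, hφν]; norm_num)
        exact interior_mono (epsCl_mono S F Set.subset_union_right) hmem'
      · intro hμmem
        have h1 : μ ∈ epsCl S F (A₀ ∪ A') := interior_subset hμmem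
        have h2 : epsCl S F (A₀ ∪ A') = epsCl S F A₀ ∪ epsCl S F A' := by
          unfold epsCl
          rw [Set.image_union, closure_union]
        rw [h2] at h1
        rcases h1 with h | h
        · exact hA₀ h
        · have hle := hcl h
          have h1' : φ μ = 1 := hφ1 rfl
          rw [Set.mem_setOf_eq, h1'] at hle
          norm_num at hle
    choose! g hg1 hg2 hg3 using key
    obtain ⟨𝓕, h𝓕Γ, heq⟩ := ha g (fun L hL => ⟨hg1 L hL, hg2 L hL⟩)
    have hμmem : μ ∈ ⋃ L ∈ 𝓕, interior (epsCl S F (g L)) := heq ▸ Set.mem_univ μ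
    obtain ⟨L, hL𝓕, hμL⟩ := Set.mem_iUnion₂.1 hμmem
    exact hg3 L (h𝓕Γ hL𝓕) hμL
  · intro ha' f hTCF
    haveI : CompleteSpace F.carrier := F.isClosed'.completeSpace_coe
    rcases isEmpty_or_nonempty (specF S F) with hX | hX
    · refine ⟨∅, by simp, ?_⟩
      simp [Set.univ_eq_empty_iff.2 hX]
    · haveI : CompactSpace (specF S F) := inferInstance
      haveI : Nonempty S := nonempty_S S F (Classical.arbitrary _)
      have hcov : ∀ μ : specF S F, ∃ L ∈ Γ, μ ∈ interior (epsCl S F (f L)) := by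
        intro μ
        have hT : IsZFilter S F {Set.univ} := by
          refine ⟨?_, ?_, rfl, ?_, ?_⟩
          · intro A hA
            rw [Set.mem_singleton_iff] at hA
            rw [hA]
            exact zset_univ S F
          · intro h0
            rw [Set.mem_singleton_iff] at h0
            exact Set.univ_nonempty.ne_empty h0.symm
          · intro A hA B hB
            rw [Set.mem_singleton_iff] at hA hB
            rw [hA, hB, Set.univ_inter]
            exact rfl
          · intro A hA B hBZ hAB
            rw [Set.mem_singleton_iff] at hA
            rw [hA] at hAB
            rw [Set.mem_singleton_iff]
            exact Set.univ_subset_iff.1 hAB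
        have hν : ∀ A ∈ ({Set.univ} : Set (Set S)), μ ∈ epsCl S F A := by
          intro A hA
          rw [Set.mem_singleton_iff] at hA
          rw [hA]
          unfold epsCl
          rw [Set.image_univ, (denseRange_epsF S F).closure_eq]
          exact Set.mem_univ μ
        obtain ⟨p, hp, hsub, hcore⟩ := exists_ultra_core S F {Set.univ} hT μ hν
        obtain ⟨L, hLΓ, hLt⟩ := ha' p hp
        exact ⟨L, hLΓ, (hTCF L hLΓ).2 ⟨p, hp, hLt.trans (tilde_subset_self S F p hp), hcore⟩⟩
      have hcov' : (Set.univ : Set (specF S F)) ⊆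
          ⋃ L : Γ, interior (epsCl S F (f (L : Set (Set S)))) := by
        intro μ _
        obtain ⟨L, hLΓ, h⟩ := hcov μ
        exact Set.mem_iUnion.2 ⟨⟨L, hLΓ⟩, h⟩
      obtain ⟨t, ht⟩ := isCompact_univ.elim_finite_subcover
        (fun L : Γ => interior (epsCl S F (f (L : Set (Set S))))) (fun _ => isOpen_interior)
        hcov'
      refine ⟨t.image (fun L : Γ => (L : Set (Set S))), ?_, ?_⟩
      · intro L hL
        rw [Finset.coe_image, Set.mem_image] at hL
        obtain ⟨L', hL't, hLeq⟩ := hL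
        rw [← hLeq]
        exact L'.2
      · refine Set.Subset.antisymm ?_ (Set.subset_univ _)
        intro μ hμ
        obtain ⟨i, hit, hμi⟩ := Set.mem_iUnion₂.1 (ht hμ)
        exact Set.mem_iUnion₂.2 ⟨(i : Set (Set S)), Finset.mem_image_of_mem (f := fun L : Γ => (L : Set (Set S))) hit, hμi⟩

end
end

section
/- Let p ∈ FS, let p̃ ∈ S^F be the corresponding point, and let A ∈ Z(F). If p̃ ∈ int(cl ε(A)) (interior and closure taken in S^F), then A ∈ p̃. -/
open Set Topology WeakDual BoundedContinuousFunction

noncomputable section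

variable (S : Type*) [TopologicalSpace S] [T2Space S] [Semigroup S]

variable {hl : ∀ s : S, Continuous (fun t => s * t)}

variable (F : MAdmissible S hl)

/-- Lemma 2.8 (4). -/
theorem statement12
    (hr : ∀ s : S, Continuous (fun t => t * s))
    (p : Set (Set S)) (hp : p ∈ zUltra S F)
    (μ : specF S F) (hμ : core S F p = {μ})
    (A : Set S) (hA : A ∈ ZSet S F)
    (h : μ ∈ interior (epsCl S F A)) :
    A ∈ tilde S F p := by
  rw [tilde, mem_sInter]
  rintro q ⟨hq, hcq⟩
  obtain ⟨hqf, hqmax⟩ := hq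
  obtain ⟨hqZ, hqne, hquniv, hqint, hqup⟩ := hqf
  obtain ⟨f, hf, hAf⟩ := hA
  -- closure of ε(A) is contained in the zero set of evaluation at f
  have hcl : epsCl S F A ⊆ {ν : specF S F | ν ⟨f, hf⟩ = 0} := by
    apply closure_minimal
    · rintro ν ⟨s, hs, rfl⟩
      have heval : (epsF S F s) ⟨f, hf⟩ = f s := rfl
      simp only [mem_setOf_eq, heval]
      have := hs
      rw [hAf] at this
      exact this
    · have hcont : Continuous fun ν : specF S F => ν ⟨f, hf⟩ :=
        (WeakDual.eval_continuous _).comp continuous_subtype_val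
      exact isClosed_eq hcont continuous_const
  -- A meets every member of q
  have hmeet : ∀ B ∈ q, (A ∩ B).Nonempty := by
    intro B hB
    have hμq : μ ∈ core S F q := by
      rw [hcq, hμ]; exact rfl
    have hμB : μ ∈ epsCl S F B := by
      have := mem_iInter₂.mp hμq B hB
      exact this
    obtain ⟨ν, hν1, hν2⟩ :=
      (mem_closure_iff.mp hμB) _ isOpen_interior h
    obtain ⟨s, hsB, rfl⟩ := hν2
    have hsA : epsF S F s ∈ epsCl S F A := interior_subset hν1
    have hfs : f s = 0 := hcl hsA
    exact ⟨s, by rw [hAf]; exact hfs, hsB⟩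
  -- Z(F) contains univ and is closed under intersections
  have hZuniv : (univ : Set S) ∈ ZSet S F :=
    ⟨0, zero_mem _, by ext s; simp⟩
  have hZinter : ∀ C D : Set S, C ∈ ZSet S F → D ∈ ZSet S F → C ∩ D ∈ ZSet S F := by
    rintro C D ⟨g, hg, rfl⟩ ⟨k, hk, rfl⟩
    refine ⟨star g * g + star k * k,
      add_mem (mul_mem (star_mem hg) hg) (mul_mem (star_mem hk) hk), ?_⟩
    ext s
    have hgs : (star g * g) s = (Complex.normSq (g s) : ℂ) := by
      simp [mul_comm, Complex.mul_conj]
    have hks : (star k * k) s = (Complex.normSq (k s) : ℂ) := by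
      simp [mul_comm, Complex.mul_conj]
    have hcoe : ((star g * g + star k * k) s)
        = ((Complex.normSq (g s) + Complex.normSq (k s) : ℝ) : ℂ) := by
      simp only [BoundedContinuousFunction.coe_add, Pi.add_apply, hgs, hks]
      push_cast; ring
    constructor
    · rintro ⟨hg0, hk0⟩
      simp only [mem_setOf_eq] at hg0 hk0 ⊢
      rw [hcoe, hg0, hk0]
      simp
    · intro hs
      simp only [mem_setOf_eq] at hs
      rw [hcoe] at hs
      have hsum : Complex.normSq (g s) + Complex.normSq (k s) = 0 := by
        exact_mod_cast hs
      have h1 : Complex.normSq (g s) = 0 ∧ Complex.normSq (k s) = 0 := by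
        constructor <;> nlinarith [Complex.normSq_nonneg (g s), Complex.normSq_nonneg (k s)]
      exact ⟨Complex.normSq_eq_zero.mp h1.1, Complex.normSq_eq_zero.mp h1.2⟩
  -- the z-filter generated by q and A
  set q' : Set (Set S) := {C | C ∈ ZSet S F ∧ ∃ B ∈ q, A ∩ B ⊆ C} with hq'def
  have hq'f : IsZFilter S F q' := by
    refine ⟨fun C hC => hC.1, ?_, ⟨hZuniv, univ, hquniv, subset_univ _⟩, ?_, ?_⟩
    · rintro ⟨-, B, hB, hsub⟩
      exact (hmeet B hB).ne_empty (subset_empty_iff.mp hsub)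
    · rintro C ⟨hCZ, B₁, hB₁, hs₁⟩ D ⟨hDZ, B₂, hB₂, hs₂⟩
      refine ⟨hZinter C D hCZ hDZ, B₁ ∩ B₂, hqint B₁ hB₁ B₂ hB₂, ?_⟩
      rintro x ⟨hxA, hxB₁, hxB₂⟩
      exact ⟨hs₁ ⟨hxA, hxB₁⟩, hs₂ ⟨hxA, hxB₂⟩⟩
    · rintro C ⟨-, B, hB, hs⟩ D hDZ hCD
      exact ⟨hDZ, B, hB, hs.trans hCD⟩
  have hsub : q ⊆ q' := fun B hB => ⟨hqZ hB, B, hB, inter_subset_right⟩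
  have heq : q' = q := hqmax q' hq'f hsub
  have hAq' : A ∈ q' := ⟨⟨f, hf, hAf⟩, univ, hquniv, by simp⟩
  rw [← heq]
  exact hAq'

end
end
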